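/- Under Assumption (Hypfct), the value function at zero consortium value satisfies v(0) = (1/δ)·sup_{0≤x≤r̄−k}(φ(h⁻¹(U(x))) − x), and this supremum is attained by a constant contract (r̂, â) with â = h⁻¹(U(r̂−k)). -/

import Mathlib

open MeasureTheory Set Filter

lemma aux_ae_swap {α β : Type*} [MeasurableSpace α] [MeasurableSpace β]
    {μ : Measure α} {ν : Measure β} [SFinite μ] [SFinite ν] {p : α × β → Prop}
    (h : ∀ᵐ z ∂μ.prod ν, p z) : ∀ᵐ y ∂ν, ∀ᵐ x ∂μ, p (x, y) :=
  Measure.ae_ae_of_ae_prod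
    ((Measure.measurePreserving_swap).quasiMeasurePreserving.tendsto_ae.eventually h)

lemma aux_exp_int {δ : ℝ} (hδ : 0 < δ) : ∫ s in Ioi (0:ℝ), Real.exp (-δ * s) = 1/δ := by
  have h1 : (∫ x in Ioi (0:ℝ), Real.exp (-(δ * x)))
      = δ⁻¹ • ∫ x in Ioi (δ * 0), Real.exp (-x) :=
    integral_comp_mul_left_Ioi (fun y => Real.exp (-y)) 0 hδ
  rw [mul_zero, integral_exp_neg_Ioi, neg_zero, Real.exp_zero] at h1
  simpa [neg_mul, one_div] using h1

set_option maxHeartbeats 1000000 in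
/-- Under Assumption (Hypfct), the public value function at zero consortium
value satisfies v(0) = (1/δ)·sup_{0≤x≤r̄−k}(φ(h⁻¹(U(x))) − x), and this supremum is attained
by a constant contract (r̂, â) with â = h⁻¹(U(r̂−k)). -/
theorem stmt_13 {Ω : Type*} [MeasurableSpace Ω] (μ : Measure Ω) [IsProbabilityMeasure μ]
    (δ k rbar : ℝ) (hδ : 0 < δ) (hk : 0 < k) (hkr : k < rbar)
    (U φ h hinv : ℝ → ℝ)
    (hUconc : StrictConcaveOn ℝ (Ici 0) U) (hUmono : StrictMonoOn U (Ici 0)) (hU0 : U 0 = 0)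
    (hUd : DifferentiableOn ℝ U (Ioi 0))
    (hUInada0 : Tendsto (deriv U) (nhdsWithin 0 (Ioi 0)) atTop)
    (hUInadaInf : Tendsto (deriv U) atTop (nhds 0))
    (hφconc : StrictConcaveOn ℝ (Ici 0) φ) (hφmono : StrictMonoOn φ (Ici 0))
    (hφ0 : φ 0 = 0) (hφd : Differentiable ℝ φ)
    (hφ'inf : Tendsto (deriv φ) atTop (nhds 1))
    (hhconv : ConvexOn ℝ (Ici 0) h) (hhmono : MonotoneOn h (Ici 0)) (hh0 : h 0 = 0)
    (hhd : Differentiable ℝ h) (hh'0 : 0 < deriv h 0)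
    (hh'inf : Tendsto (deriv h) atTop atTop)
    (hinv_left : ∀ x ∈ Ici (0:ℝ), hinv (h x) = x)
    (hinv_right : ∀ y ∈ h '' Ici (0:ℝ), h (hinv y) = y)
    (v : ℝ → ℝ)
    (hv : ∀ x : ℝ, v x = sSup {J : ℝ | ∃ R A : ℝ → Ω → ℝ,
      Measurable (fun p : ℝ × Ω => R p.1 p.2) ∧ Measurable (fun p : ℝ × Ω => A p.1 p.2) ∧
      (∀ᵐ p ∂((volume.restrict (Ici (0:ℝ))).prod μ),
        0 ≤ A p.1 p.2 ∧ 0 ≤ U (R p.1 p.2 - k) - h (A p.1 p.2) ∧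
        k ≤ R p.1 p.2 ∧ R p.1 p.2 ≤ rbar) ∧
      (∫ ω, (∫ s in Ioi (0:ℝ), Real.exp (-δ * s) * (U (R s ω - k) - h (A s ω))) ∂μ) = x ∧
      J = ∫ ω, (∫ s in Ioi (0:ℝ), Real.exp (-δ * s) * (φ (A s ω) - R s ω + k)) ∂μ}) :
    v 0 = (1 / δ) * sSup ((fun x => φ (hinv (U x)) - x) '' Icc 0 (rbar - k)) ∧
    ∃ rhat ∈ Icc k rbar,
      φ (hinv (U (rhat - k))) - (rhat - k) =
        sSup ((fun x => φ (hinv (U x)) - x) '' Icc 0 (rbar - k)) := by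
  set b : ℝ := rbar - k with hb_def
  have hb : 0 < b := by simp [hb_def]; linarith
  set g : ℝ → ℝ := fun x => φ (hinv (U x)) - x with hg_def
  -- basic facts about h
  have hUmono' : MonotoneOn U (Ici 0) := hUmono.monotoneOn
  have hφmono' : MonotoneOn φ (Ici 0) := hφmono.monotoneOn
  have hderivh : ∀ x : ℝ, 0 ≤ x → deriv h 0 ≤ deriv h x := by
    intro x hx
    rcases eq_or_lt_of_le hx with rfl | hx'
    · exact le_refl _
    · exact (hhconv.deriv_le_slope (self_mem_Ici) hx hx' (hhd 0)).trans
        (hhconv.slope_le_deriv (self_mem_Ici) hx hx' (hhd x))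
  have hh_strict : StrictMonoOn h (Ici 0) := by
    apply strictMonoOn_of_deriv_pos (convex_Ici 0) hhd.continuous.continuousOn
    intro x hx
    rw [interior_Ici] at hx
    exact lt_of_lt_of_le hh'0 (hderivh x (le_of_lt hx))
  have hsurj : ∀ y : ℝ, 0 ≤ y → ∃ a, 0 ≤ a ∧ h a = y := by
    intro y hy
    obtain ⟨t0, ht0⟩ := (hh'inf.eventually (eventually_ge_atTop (1:ℝ))).exists_forall_of_atTop
    set t1 : ℝ := max t0 0 with ht1_def
    have ht1d : 1 ≤ deriv h t1 := ht0 t1 (le_max_left _ _)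
    have ht1nn : 0 ≤ t1 := le_max_right _ _
    set t : ℝ := t1 + max (y - h t1) 1 with ht_def
    have htt1 : t1 < t := lt_add_of_pos_right _ (lt_of_lt_of_le zero_lt_one (le_max_right _ _))
    have htnn : 0 ≤ t := ht1nn.trans htt1.le
    have hslope : deriv h t1 ≤ slope h t1 t := hhconv.deriv_le_slope ht1nn htnn htt1 (hhd t1)
    rw [slope_def_field] at hslope
    have hty : y ≤ h t := by
      have h1 : (1:ℝ) ≤ (h t - h t1) / (t - t1) := le_trans ht1d hslope
      rw [le_div_iff₀ (by linarith)] at h1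
      have h2 : y - h t1 ≤ max (y - h t1) 1 := le_max_left _ _
      have h3 : t - t1 = max (y - h t1) 1 := by rw [ht_def]; ring
      nlinarith
    have hmem : y ∈ Icc (h 0) (h t) := ⟨by rw [hh0]; exact hy, hty⟩
    obtain ⟨a, ha, hay⟩ := intermediate_value_Icc htnn (hhd.continuous.continuousOn) hmem
    exact ⟨a, ha.1, hay⟩
  have him : ∀ y : ℝ, 0 ≤ y → y ∈ h '' Ici 0 := by
    intro y hy; obtain ⟨a, ha, hay⟩ := hsurj y hy; exact ⟨a, ha, hay⟩
  have hinv_nonneg : ∀ y : ℝ, 0 ≤ y → 0 ≤ hinv y := by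
    intro y hy; obtain ⟨a, ha, rfl⟩ := hsurj y hy; rw [hinv_left a ha]; exact ha
  have hinv_h : ∀ y : ℝ, 0 ≤ y → h (hinv y) = y := fun y hy => hinv_right y (him y hy)
  have hinv_mono : ∀ y1 y2 : ℝ, 0 ≤ y1 → y1 ≤ y2 → hinv y1 ≤ hinv y2 := by
    intro y1 y2 h1 h12
    have e1 : h (hinv y1) = y1 := hinv_h y1 h1
    have e2 : h (hinv y2) = y2 := hinv_h y2 (h1.trans h12)
    by_contra hcon
    push_neg at hcon
    have := hh_strict (hinv_nonneg y2 (h1.trans h12)) (hinv_nonneg y1 h1) hcon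
    rw [e1, e2] at this; linarith
  have hinv_strict : ∀ y1 y2 : ℝ, 0 ≤ y1 → y1 < y2 → hinv y1 < hinv y2 := by
    intro y1 y2 h1 h12
    rcases lt_or_eq_of_le (hinv_mono y1 y2 h1 h12.le) with h' | h'
    · exact h'
    · exfalso
      have e1 : h (hinv y1) = y1 := hinv_h y1 h1
      have e2 : h (hinv y2) = y2 := hinv_h y2 (h1.trans h12.le)
      rw [h'] at e1; rw [e1] at e2; linarith
  have hU0b : 0 < U b := by rw [← hU0]; exact hUmono self_mem_Ici hb.le hb
  have hUx_nonneg : ∀ x : ℝ, 0 ≤ x → 0 ≤ U x := by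
    intro x hx; rw [← hU0]; exact hUmono' self_mem_Ici hx hx
  have hinv0 : hinv 0 = 0 := by
    calc hinv 0 = hinv (h 0) := by rw [hh0]
    _ = 0 := hinv_left 0 self_mem_Ici
  have hg0 : g 0 = 0 := by simp [hg_def, hU0, hinv0, hφ0]
  -- bounds for g
  have hgle : ∀ x ∈ Icc (0:ℝ) b, g x ≤ φ (hinv (U b)) := by
    rintro x ⟨hx0, hxb⟩
    have h1 : U x ≤ U b := hUmono' hx0 hb.le hxb
    have h2 : hinv (U x) ≤ hinv (U b) := hinv_mono _ _ (hUx_nonneg x hx0) h1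
    have h3 : φ (hinv (U x)) ≤ φ (hinv (U b)) :=
      hφmono' (hinv_nonneg _ (hUx_nonneg x hx0)) (hinv_nonneg _ (hUx_nonneg b hb.le)) h2
    simp only [hg_def]; linarith
  have hne : ((fun x => φ (hinv (U x)) - x) '' Icc 0 b).Nonempty :=
    ⟨g 0, 0, ⟨le_refl 0, hb.le⟩, rfl⟩
  have hbdd : BddAbove ((fun x => φ (hinv (U x)) - x) '' Icc 0 b) := by
    refine ⟨φ (hinv (U b)), ?_⟩
    rintro y ⟨x, hx, rfl⟩; exact hgle x hx
  set M : ℝ := sSup ((fun x => φ (hinv (U x)) - x) '' Icc 0 b) with hM_def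
  have hgM : ∀ x ∈ Icc (0:ℝ) b, g x ≤ M := fun x hx => le_csSup hbdd ⟨x, hx, rfl⟩
  have hM0 : 0 ≤ M := by rw [← hg0]; exact hgM 0 ⟨le_refl 0, hb.le⟩
  -- the feasible set at consortium value 0
  set S : Set ℝ := {J : ℝ | ∃ R A : ℝ → Ω → ℝ,
      Measurable (fun p : ℝ × Ω => R p.1 p.2) ∧ Measurable (fun p : ℝ × Ω => A p.1 p.2) ∧
      (∀ᵐ p ∂((volume.restrict (Ici (0:ℝ))).prod μ),
        0 ≤ A p.1 p.2 ∧ 0 ≤ U (R p.1 p.2 - k) - h (A p.1 p.2) ∧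
        k ≤ R p.1 p.2 ∧ R p.1 p.2 ≤ rbar) ∧
      (∫ ω, (∫ s in Ioi (0:ℝ), Real.exp (-δ * s) * (U (R s ω - k) - h (A s ω))) ∂μ) = 0 ∧
      J = ∫ ω, (∫ s in Ioi (0:ℝ), Real.exp (-δ * s) * (φ (A s ω) - R s ω + k)) ∂μ} with hS_def
  have hv0 : v 0 = sSup S := hv 0
  -- constant contracts are feasible
  have hSin : ∀ x ∈ Icc (0:ℝ) b, (1/δ) * g x ∈ S := by
    rintro x ⟨hx0, hxb⟩
    refine ⟨fun _ _ => x + k, fun _ _ => hinv (U x), measurable_const, measurable_const,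
      ?_, ?_, ?_⟩
    · refine Eventually.of_forall (fun p => ?_)
      dsimp only
      refine ⟨hinv_nonneg _ (hUx_nonneg x hx0), ?_, by linarith, by rw [hb_def] at hxb; linarith⟩
      rw [add_sub_cancel_right, hinv_h (U x) (hUx_nonneg x hx0), sub_self]
    · have e0 : U (x + k - k) - h (hinv (U x)) = 0 := by
        rw [add_sub_cancel_right, hinv_h (U x) (hUx_nonneg x hx0), sub_self]
      dsimp only
      simp only [e0, mul_zero, integral_zero]
    · dsimp only
      have hint : (∫ s in Ioi (0:ℝ), Real.exp (-δ * s) * (φ (hinv (U x)) - (x + k) + k))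
          = (1/δ) * (φ (hinv (U x)) - (x + k) + k) := by
        rw [MeasureTheory.integral_mul_const, aux_exp_int hδ, mul_comm]
      rw [hint, integral_const, probReal_univ, one_smul]
      simp only [hg_def]; ring
  -- every feasible value is at most M/δ
  have hSub : ∀ J ∈ S, J ≤ (1/δ) * M := by
    rintro J ⟨R, A, hmR, hmA, hae, hcon, hJ⟩
    have hUb_nn : 0 ≤ U b := hU0b.le
    set ab : ℝ := hinv (U b) with hab_def
    have hab_nn : 0 ≤ ab := hinv_nonneg _ hUb_nn
    set K : ℝ := max (φ ab) (rbar - k) with hK_def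
    have hpt : ∀ r a : ℝ, 0 ≤ a → 0 ≤ U (r - k) - h a → k ≤ r → r ≤ rbar →
        (φ a - r + k ≤ g (r - k) ∧ |φ a - r + k| ≤ K) := by
      intro r a ha hUh hkr' hrb
      have hrk0 : 0 ≤ r - k := by linarith
      have hrkb : r - k ≤ b := by rw [hb_def]; linarith
      have hU_nn : 0 ≤ U (r - k) := hUx_nonneg _ hrk0
      have hhA : h a ≤ U (r - k) := by linarith
      have haU : a ≤ hinv (U (r - k)) := by
        by_contra hcon'
        push_neg at hcon'
        have := hh_strict (hinv_nonneg _ hU_nn) ha hcon'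
        rw [hinv_h _ hU_nn] at this; linarith
      have hφa : φ a ≤ φ (hinv (U (r - k))) := hφmono' ha (hinv_nonneg _ hU_nn) haU
      constructor
      · simp only [hg_def]; linarith
      · have h1 : φ a ≤ φ ab := by
          apply hφmono' ha hab_nn
          exact haU.trans (hinv_mono _ _ hU_nn (hUmono' hrk0 hb.le hrkb))
        have h2 : 0 ≤ φ a := by rw [← hφ0]; exact hφmono' self_mem_Ici ha ha
        rw [abs_le]
        constructor
        · have h3 : -(rbar - k) ≤ φ a - r + k := by linarith
          have h4 : -K ≤ -(rbar - k) := neg_le_neg (le_max_right _ _)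
          linarith
        · have h3 : φ a - r + k ≤ φ ab := by linarith
          exact h3.trans (le_max_left _ _)
    have hae' : ∀ᵐ ω ∂μ, ∀ᵐ s ∂(volume.restrict (Ici (0:ℝ))),
        (0 ≤ A s ω ∧ 0 ≤ U (R s ω - k) - h (A s ω) ∧ k ≤ R s ω ∧ R s ω ≤ rbar) :=
      aux_ae_swap hae
    have hmF : Measurable (fun p : ℝ × Ω =>
        Real.exp (-δ * p.1) * (φ (A p.1 p.2) - R p.1 p.2 + k)) := by
      apply Measurable.mul
      · exact Real.measurable_exp.comp (measurable_fst.const_mul (-δ))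
      · exact ((hφd.continuous.measurable.comp hmA).sub hmR).add_const k
    set I : Ω → ℝ :=
      fun ω => ∫ s in Ioi (0:ℝ), Real.exp (-δ * s) * (φ (A s ω) - R s ω + k) with hI_def
    have hImeas : StronglyMeasurable I := hmF.stronglyMeasurable.integral_prod_left'
    have hexp_int : IntegrableOn (fun s : ℝ => Real.exp (-δ * s)) (Ioi 0) :=
      exp_neg_integrableOn_Ioi 0 hδ
    have hKexp_int : IntegrableOn (fun s : ℝ => K * Real.exp (-δ * s)) (Ioi 0) :=
      hexp_int.const_mul K
    have hMexp_int : IntegrableOn (fun s : ℝ => Real.exp (-δ * s) * M) (Ioi 0) :=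
      hexp_int.mul_const M
    have hbound : ∀ᵐ ω ∂μ, I ω ≤ (1/δ) * M ∧ ‖I ω‖ ≤ K * (1/δ) := by
      filter_upwards [hae'] with ω hω
      have hω' : ∀ᵐ s ∂(volume.restrict (Ioi (0:ℝ))),
          (0 ≤ A s ω ∧ 0 ≤ U (R s ω - k) - h (A s ω) ∧ k ≤ R s ω ∧ R s ω ≤ rbar) :=
        ae_restrict_of_ae_restrict_of_subset Ioi_subset_Ici_self hω
      have hsecA : Measurable (fun s => A s ω) := hmA.comp measurable_prodMk_right
      have hsecR : Measurable (fun s => R s ω) := hmR.comp measurable_prodMk_right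
      have hsec_meas : Measurable (fun s => Real.exp (-δ * s) * (φ (A s ω) - R s ω + k)) :=
        (Real.measurable_exp.comp (measurable_id.const_mul (-δ))).mul
          (((hφd.continuous.measurable.comp hsecA).sub hsecR).add_const k)
      have hnorm : ∀ᵐ s ∂(volume.restrict (Ioi (0:ℝ))),
          ‖Real.exp (-δ * s) * (φ (A s ω) - R s ω + k)‖ ≤ K * Real.exp (-δ * s) := by
        filter_upwards [hω'] with s hs
        have hb1 := (hpt _ _ hs.1 hs.2.1 hs.2.2.1 hs.2.2.2).2
        calc ‖Real.exp (-δ * s) * (φ (A s ω) - R s ω + k)‖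
            = Real.exp (-δ * s) * |φ (A s ω) - R s ω + k| := by
              rw [Real.norm_eq_abs, abs_mul, abs_of_pos (Real.exp_pos _)]
          _ ≤ Real.exp (-δ * s) * K :=
              mul_le_mul_of_nonneg_left hb1 (Real.exp_pos _).le
          _ = K * Real.exp (-δ * s) := mul_comm _ _
      have hf_int : IntegrableOn
          (fun s => Real.exp (-δ * s) * (φ (A s ω) - R s ω + k)) (Ioi 0) :=
        Integrable.mono' hKexp_int hsec_meas.aestronglyMeasurable hnorm
      constructor
      · have h1 : I ω ≤ ∫ s in Ioi (0:ℝ), Real.exp (-δ * s) * M := by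
          apply integral_mono_ae hf_int hMexp_int
          filter_upwards [hω'] with s hs
          have h2 := (hpt _ _ hs.1 hs.2.1 hs.2.2.1 hs.2.2.2).1
          have h3 : R s ω - k ∈ Icc (0:ℝ) b := by
            constructor
            · linarith [hs.2.2.1]
            · rw [hb_def]; linarith [hs.2.2.2]
          have h4 := (h2.trans (hgM _ h3))
          exact mul_le_mul_of_nonneg_left h4 (Real.exp_pos _).le
        have h5 : (∫ s in Ioi (0:ℝ), Real.exp (-δ * s) * M) = (1/δ) * M := by
          rw [MeasureTheory.integral_mul_const, aux_exp_int hδ]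
        rw [h5] at h1; exact h1
      · have h6 : ‖I ω‖ ≤ ∫ s in Ioi (0:ℝ), K * Real.exp (-δ * s) :=
          norm_integral_le_of_norm_le hKexp_int hnorm
        have h7 : (∫ s in Ioi (0:ℝ), K * Real.exp (-δ * s)) = K * (1/δ) := by
          rw [integral_const_mul, aux_exp_int hδ]
        rw [h7] at h6; exact h6
    have hI_int : Integrable I μ := by
      apply Integrable.mono' (integrable_const (K * (1/δ))) hImeas.aestronglyMeasurable
      filter_upwards [hbound] with ω hω using hω.2
    rw [hJ]
    calc (∫ ω, I ω ∂μ) ≤ ∫ _, (1/δ) * M ∂μ :=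
        integral_mono_ae hI_int (integrable_const _)
          (by filter_upwards [hbound] with ω hω using hω.1)
      _ = (1/δ) * M := by rw [integral_const, probReal_univ, one_smul]
  -- the sSup identity
  have hS_ne : S.Nonempty := ⟨(1/δ) * g 0, hSin 0 ⟨le_refl 0, hb.le⟩⟩
  have hS_bdd : BddAbove S := ⟨(1/δ) * M, fun J hJ => hSub J hJ⟩
  have hsSup_le : sSup S ≤ (1/δ) * M := csSup_le hS_ne hSub
  have hle_sSup : (1/δ) * M ≤ sSup S := by
    have hM_le : M ≤ δ * sSup S := by
      apply csSup_le hne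
      rintro y ⟨x, hx, rfl⟩
      have h1 : (1/δ) * g x ≤ sSup S := le_csSup hS_bdd (hSin x hx)
      have h2 : δ * ((1/δ) * g x) ≤ δ * sSup S := mul_le_mul_of_nonneg_left h1 hδ.le
      have h3 : δ * ((1/δ) * g x) = g x := by field_simp
      rw [h3] at h2
      exact h2
    calc (1/δ) * M ≤ (1/δ) * (δ * sSup S) :=
        mul_le_mul_of_nonneg_left hM_le (by positivity)
      _ = sSup S := by field_simp
  have hpart1 : v 0 = (1/δ) * M := by rw [hv0]; exact le_antisymm hsSup_le hle_sSup
  -- Part C : attainment of the supremum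
  set ψ : ℝ → ℝ := fun y => φ (hinv y) with hψ_def
  set W : ℝ := U b + 1 with hW_def
  have hUbW : U b < W := by rw [hW_def]; linarith
  have hWpos : 0 < W := by rw [hW_def]; linarith
  have hψconc : ConcaveOn ℝ (Icc 0 W) ψ := by
    refine ⟨convex_Icc _ _, ?_⟩
    rintro y1 hy1 y2 hy2 t1 t2 ht1 ht2 hsum
    obtain ⟨a1, ha1, rfl⟩ := hsurj y1 hy1.1
    obtain ⟨a2, ha2, rfl⟩ := hsurj y2 hy2.1
    simp only [smul_eq_mul]
    have hcomb_nn : 0 ≤ t1 * a1 + t2 * a2 := by positivity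
    have hha1 : 0 ≤ h a1 := by rw [← hh0]; exact hhmono self_mem_Ici ha1 ha1
    have hha2 : 0 ≤ h a2 := by rw [← hh0]; exact hhmono self_mem_Ici ha2 ha2
    have hhc : h (t1 * a1 + t2 * a2) ≤ t1 * h a1 + t2 * h a2 := by
      have := hhconv.2 ha1 ha2 ht1 ht2 hsum
      simpa [smul_eq_mul] using this
    have hcomb_y_nn : 0 ≤ t1 * h a1 + t2 * h a2 :=
      add_nonneg (mul_nonneg ht1 hha1) (mul_nonneg ht2 hha2)
    have h5 : t1 * a1 + t2 * a2 ≤ hinv (t1 * h a1 + t2 * h a2) := by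
      have hcombh_nn : 0 ≤ h (t1 * a1 + t2 * a2) := by
        rw [← hh0]; exact hhmono self_mem_Ici hcomb_nn hcomb_nn
      have h6 := hinv_mono _ _ hcombh_nn hhc
      rwa [hinv_left _ hcomb_nn] at h6
    have h7 : φ (t1 * a1 + t2 * a2) ≤ φ (hinv (t1 * h a1 + t2 * h a2)) :=
      hφmono' hcomb_nn (hinv_nonneg _ hcomb_y_nn) h5
    have h8 : t1 * φ a1 + t2 * φ a2 ≤ φ (t1 * a1 + t2 * a2) := by
      have := (hφconc.concaveOn).2 ha1 ha2 ht1 ht2 hsum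
      simpa [smul_eq_mul] using this
    have e1 : ψ (h a1) = φ a1 := by rw [hψ_def]; simp only; rw [hinv_left a1 ha1]
    have e2 : ψ (h a2) = φ a2 := by rw [hψ_def]; simp only; rw [hinv_left a2 ha2]
    rw [e1, e2]
    calc t1 * φ a1 + t2 * φ a2 ≤ φ (t1 * a1 + t2 * a2) := h8
      _ ≤ ψ (t1 * h a1 + t2 * h a2) := h7
  set c : ℝ := ψ W - ψ (U b) with hc_def
  have hc_pos : 0 < c := by
    have h1 : hinv (U b) < hinv W := hinv_strict (U b) W hU0b.le hUbW
    have h2 : φ (hinv (U b)) < φ (hinv W) :=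
      hφmono (hinv_nonneg _ hU0b.le) (hinv_nonneg _ hWpos.le) h1
    rw [hc_def, hψ_def]; simp only; linarith
  have hslope_ψ : ∀ u v : ℝ, 0 ≤ u → u < v → v ≤ U b → c * (v - u) ≤ ψ v - ψ u := by
    intro u v hu huv hvb
    have hWmem : W ∈ Icc (0:ℝ) W := ⟨hWpos.le, le_refl _⟩
    have humem : u ∈ Icc (0:ℝ) W := ⟨hu, by linarith⟩
    have hvmem : v ∈ Icc (0:ℝ) W := ⟨by linarith, by linarith⟩
    have hUbmem : U b ∈ Icc (0:ℝ) W := ⟨hU0b.le, hUbW.le⟩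
    have s1 : slope ψ W (U b) = c := by
      rw [slope_def_field, hc_def]
      have : U b - W = -1 := by rw [hW_def]; ring
      rw [this]; field_simp; ring
    have s2 : slope ψ W (U b) ≤ slope ψ W u :=
      (hψconc.slope_anti hWmem) ⟨humem, by simp; linarith⟩ ⟨hUbmem, by simp; linarith⟩
        (by linarith)
    have s3 : slope ψ u W ≤ slope ψ u v :=
      (hψconc.slope_anti humem) ⟨hvmem, by simp; linarith⟩ ⟨hWmem, by simp; linarith⟩
        (by linarith)
    have s4 : slope ψ u W = slope ψ W u := slope_comm ψ u W
    have s5 : c ≤ slope ψ u v := by rw [← s1]; rw [s4] at s3; exact le_trans s2 s3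
    rw [slope_def_field, le_div_iff₀ (by linarith : (0:ℝ) < v - u)] at s5
    linarith
  obtain ⟨ε, hε_mem, hε⟩ := mem_nhdsGT_iff_exists_Ioc_subset.mp
    (hUInada0.eventually (eventually_ge_atTop (1/c)))
  set ε' : ℝ := min ε b with hε'_def
  have hε'0 : 0 < ε' := lt_min hε_mem hb
  have hε'b : ε' ≤ b := min_le_right _ _
  have hgmono : ∀ x y : ℝ, 0 < x → x ≤ y → y ≤ ε' → g x ≤ g y := by
    intro x y hx hxy hyε
    rcases eq_or_lt_of_le hxy with rfl | hxy'
    · exact le_refl _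
    have hy0 : 0 < y := lt_of_lt_of_le hx hxy
    have hyb : y ≤ b := hyε.trans hε'b
    have hder : 1/c ≤ deriv U y := hε ⟨hy0, hyε.trans (min_le_left _ _)⟩
    have hdiff : DifferentiableAt ℝ U y := hUd.differentiableAt (Ioi_mem_nhds hy0)
    have hslopeU : deriv U y ≤ slope U x y :=
      (hUconc.concaveOn).deriv_le_slope hx.le (hy0.le : y ∈ Ici (0:ℝ)) hxy' hdiff
    rw [slope_def_field] at hslopeU
    have hUxy : (1/c) * (y - x) ≤ U y - U x := by
      have h1 := le_trans hder hslopeU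
      rw [le_div_iff₀ (by linarith : (0:ℝ) < y - x)] at h1
      nlinarith
    have hUx0 : 0 ≤ U x := hUx_nonneg x hx.le
    have hUxy' : U x < U y := hUmono hx.le hy0.le hxy'
    have hUyb : U y ≤ U b := hUmono' hy0.le hb.le hyb
    have hψs := hslope_ψ (U x) (U y) hUx0 hUxy' hUyb
    have hyx : y - x ≤ c * (U y - U x) := by
      have h2 : c * ((1/c) * (y - x)) ≤ c * (U y - U x) :=
        mul_le_mul_of_nonneg_left hUxy hc_pos.le
      have h3 : c * ((1/c) * (y - x)) = y - x := by
        rw [one_div, ← mul_assoc, mul_inv_cancel₀ (ne_of_gt hc_pos), one_mul]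
      exact h3 ▸ h2
    have hgoal : ψ (U x) - x ≤ ψ (U y) - y := by nlinarith
    simpa [hg_def, hψ_def] using hgoal
  -- continuity on [ε', b]
  have hcontU : ContinuousOn U (Icc ε' b) :=
    (hUd.continuousOn).mono (fun x hx => lt_of_lt_of_le hε'0 hx.1)
  have hcontψ : ContinuousOn ψ (Ioo 0 W) := by
    have := hψconc.continuousOn_interior
    rwa [interior_Icc] at this
  have hmaps : MapsTo U (Icc ε' b) (Ioo 0 W) := by
    intro x hx
    have hx0 : 0 < x := lt_of_lt_of_le hε'0 hx.1
    constructor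
    · rw [← hU0]; exact hUmono self_mem_Ici hx0.le hx0
    · have : U x ≤ U b := hUmono' hx0.le hb.le hx.2
      linarith
  have hcontg : ContinuousOn g (Icc ε' b) := by
    have h1 : ContinuousOn (fun x => ψ (U x)) (Icc ε' b) := hcontψ.comp hcontU hmaps
    have h2 : ContinuousOn (fun x => ψ (U x) - x) (Icc ε' b) := h1.sub continuousOn_id
    exact h2
  obtain ⟨xh, hxhmem, hxhmax⟩ :=
    isCompact_Icc.exists_isMaxOn (⟨ε', left_mem_Icc.mpr hε'b⟩ : (Icc ε' b).Nonempty) hcontg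
  have hxhmax' : ∀ z ∈ Icc ε' b, g z ≤ g xh := fun z hz => hxhmax hz
  have hxhIcc : xh ∈ Icc (0:ℝ) b := ⟨hε'0.le.trans hxhmem.1, hxhmem.2⟩
  have hglobal : ∀ x ∈ Icc (0:ℝ) b, g x ≤ max (g 0) (g xh) := by
    rintro x ⟨hx0, hxb⟩
    rcases eq_or_lt_of_le hx0 with rfl | hx0'
    · exact le_max_left _ _
    rcases le_total x ε' with hxε | hxε
    · have h1 := hgmono x ε' hx0' hxε (le_refl _)
      have h2 := hxhmax' ε' (left_mem_Icc.mpr hε'b)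
      exact le_trans (h1.trans h2) (le_max_right _ _)
    · exact le_trans (hxhmax' x ⟨hxε, hxb⟩) (le_max_right _ _)
  have hMval : M = max (g 0) (g xh) := by
    apply le_antisymm
    · exact csSup_le hne (by rintro y ⟨x, hx, rfl⟩; exact hglobal x hx)
    · rcases le_total (g 0) (g xh) with h' | h'
      · rw [max_eq_right h']; exact le_csSup hbdd ⟨xh, hxhIcc, rfl⟩
      · rw [max_eq_left h']; exact le_csSup hbdd ⟨0, ⟨le_refl 0, hb.le⟩, rfl⟩
  refine ⟨hpart1, ?_⟩
  rcases le_total (g 0) (g xh) with h' | h'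
  · refine ⟨xh + k, ⟨by linarith [hxhIcc.1], ?_⟩, ?_⟩
    · have := hxhIcc.2; rw [hb_def] at this; linarith
    · rw [add_sub_cancel_right, hMval, max_eq_right h']
  · refine ⟨k, ⟨le_refl k, hkr.le⟩, ?_⟩
    rw [sub_self, hMval, max_eq_left h']
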